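/- Let V be a finite nonempty type and let p, q : V → ℝ be probability mass functions (p v ≥ 0, q v ≥ 0 for all v, and Σ_v p v = Σ_v q v = 1) with p v + q v > 0 for every v. For any discriminator D : V → ℝ with 0 < D v < 1 for all v, define U(D) = Σ_v (p v · log(D v) + q v · log(1 − D v)), where the convention 0 · log x = 0 is used. Then the discriminator D* given by D* v = p v / (p v + q v) satisfies U(D) ≤ U(D*) for every such D. -/

import Mathlib

open Real in
lemma megan_pointwise (p q D : ℝ) (hp : 0 ≤ p) (hq : 0 ≤ q) (hpq : 0 < p + q)
    (hD0 : 0 < D) (hD1 : D < 1) :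
    p * Real.log D + q * Real.log (1 - D) ≤
      p * Real.log (p / (p + q)) + q * Real.log (1 - p / (p + q)) := by
  have h1D : 0 < 1 - D := by linarith
  have hq' : 1 - p / (p + q) = q / (p + q) := by field_simp; ring
  rw [hq']
  rcases eq_or_lt_of_le hp with hp0 | hp0
  · -- p = 0
    rw [← hp0]
    have hq0 : 0 < q := by linarith
    simp only [zero_mul, zero_add, zero_div, zero_add]
    have : q / q = 1 := div_self hq0.ne'
    rw [this, Real.log_one, mul_zero]
    have : Real.log (1 - D) ≤ 0 := Real.log_nonpos (by linarith) (by linarith)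
    nlinarith
  rcases eq_or_lt_of_le hq with hq0 | hq0
  · -- q = 0
    rw [← hq0]
    simp only [zero_mul, add_zero]
    have : p / p = 1 := div_self hp0.ne'
    rw [this, Real.log_one, mul_zero]
    have : Real.log D ≤ 0 := Real.log_nonpos hD0.le hD1.le
    nlinarith
  -- general case
  have hpp : 0 < p / (p + q) := by positivity
  have hqq : 0 < q / (p + q) := by positivity
  have e1 : Real.log D - Real.log (p / (p + q)) = Real.log (D / (p / (p + q))) :=
    (Real.log_div hD0.ne' hpp.ne').symm
  have e2 : Real.log (1 - D) - Real.log (q / (p + q)) = Real.log ((1 - D) / (q / (p + q))) :=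
    (Real.log_div h1D.ne' hqq.ne').symm
  have h1 : Real.log (D / (p / (p + q))) ≤ D / (p / (p + q)) - 1 :=
    Real.log_le_sub_one_of_pos (by positivity)
  have h2 : Real.log ((1 - D) / (q / (p + q))) ≤ (1 - D) / (q / (p + q)) - 1 :=
    Real.log_le_sub_one_of_pos (by positivity)
  have d1 : D / (p / (p + q)) = D * (p + q) / p := by field_simp
  have d2 : (1 - D) / (q / (p + q)) = (1 - D) * (p + q) / q := by field_simp
  rw [d1] at h1
  rw [d2] at h2
  have k1 : p * (Real.log D - Real.log (p / (p + q))) ≤ D * (p + q) - p := by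
    rw [e1, d1]
    calc p * Real.log (D * (p + q) / p) ≤ p * (D * (p + q) / p - 1) := by
          exact mul_le_mul_of_nonneg_left h1 hp
      _ = D * (p + q) - p := by field_simp
  have k2 : q * (Real.log (1 - D) - Real.log (q / (p + q))) ≤ (1 - D) * (p + q) - q := by
    rw [e2, d2]
    calc q * Real.log ((1 - D) * (p + q) / q) ≤ q * ((1 - D) * (p + q) / q - 1) := by
          exact mul_le_mul_of_nonneg_left h2 hq
      _ = (1 - D) * (p + q) - q := by field_simp
  nlinarith

open Finset in
/-- The discriminator `D* v = p v / (p v + q v)` maximizes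
`U(D) = ∑ v, (p v · log (D v) + q v · log (1 − D v))` over discriminators with values
strictly between 0 and 1. -/
theorem megan_optimal_discriminator {V : Type*} [Fintype V] [Nonempty V]
    (p q : V → ℝ) (hp : ∀ v, 0 ≤ p v) (hq : ∀ v, 0 ≤ q v)
    (hps : ∑ v, p v = 1) (hqs : ∑ v, q v = 1)
    (hpq : ∀ v, 0 < p v + q v)
    (D : V → ℝ) (hD : ∀ v, 0 < D v ∧ D v < 1) :
    ∑ v, (p v * Real.log (D v) + q v * Real.log (1 - D v)) ≤
      ∑ v, (p v * Real.log (p v / (p v + q v)) +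
        q v * Real.log (1 - p v / (p v + q v))) := by
  apply Finset.sum_le_sum
  intro v _
  exact megan_pointwise (p v) (q v) (D v) (hp v) (hq v) (hpq v) (hD v).1 (hD v).2
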